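/- As f → 0, the product of the effective drag coefficient and the effective diffusion coefficient satisfies ζ(f)·D(f) = 1 + O(f²); that is, ζ(f)·D(f) − 1 is O(f²) near f = 0 (the non-dimensional Einstein relation holds to first order in f). -/

import Mathlib

open MeasureTheory intervalIntegral Asymptotics Filter

noncomputable def w0 (φ : ℝ → ℝ) (f x : ℝ) : ℝ :=
  ∫ s in (0:ℝ)..1, Real.exp (φ (x + s) - φ x - f * s)

noncomputable def M0 (φ : ℝ → ℝ) (f : ℝ) : ℝ := ∫ x in (0:ℝ)..1, w0 φ f x

noncomputable def w1 (φ : ℝ → ℝ) (f x : ℝ) : ℝ :=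
  ∫ s in (0:ℝ)..1, (w0 φ f (x + s)) ^ 2 * Real.exp (φ (x + s) - φ x - f * s)

noncomputable def M1 (φ : ℝ → ℝ) (f : ℝ) : ℝ := ∫ x in (0:ℝ)..1, w1 φ f x

/-! ### Auxiliary definitions -/

noncomputable def qA (φ : ℝ → ℝ) (y : ℝ) : ℝ :=
  ∫ s in (0:ℝ)..1, s * Real.exp (φ (y + s) - φ y)

noncomputable def AA (φ : ℝ → ℝ) : ℝ := ∫ x in (0:ℝ)..1, Real.exp (φ x)

noncomputable def BB (φ : ℝ → ℝ) : ℝ := ∫ x in (0:ℝ)..1, Real.exp (-φ x)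

noncomputable def QQ (φ : ℝ → ℝ) : ℝ := ∫ x in (0:ℝ)..1, qA φ x

/-! ### Continuity -/

lemma cont_w0 (φ : ℝ → ℝ) (hφc : Continuous φ) (f : ℝ) : Continuous (w0 φ f) := by
  unfold w0
  apply intervalIntegral.continuous_parametric_intervalIntegral_of_continuous'
  fun_prop

lemma cont_qA (φ : ℝ → ℝ) (hφc : Continuous φ) : Continuous (qA φ) := by
  unfold qA
  apply intervalIntegral.continuous_parametric_intervalIntegral_of_continuous'
  fun_prop

/-! ### Shift invariance and periodicity -/

lemma shift01 (g : ℝ → ℝ) (hp : Function.Periodic g 1) (x : ℝ) :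
    ∫ s in (0:ℝ)..1, g (x + s) = ∫ s in (0:ℝ)..1, g s := by
  rw [intervalIntegral.integral_comp_add_left g x]
  simpa using hp.intervalIntegral_add_eq x 0

lemma shift01' (g : ℝ → ℝ) (hp : Function.Periodic g 1) (x : ℝ) :
    ∫ s in (0:ℝ)..1, g (s - x) = ∫ s in (0:ℝ)..1, g s := by
  rw [intervalIntegral.integral_comp_sub_right g x,
    show (1:ℝ) - x = -x + 1 by ring, show (0:ℝ) - x = -x by ring]
  simpa using hp.intervalIntegral_add_eq (-x) 0

lemma w0_per (φ : ℝ → ℝ) (hφper : ∀ x, φ (x + 1) = φ x) (f : ℝ) :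
    Function.Periodic (w0 φ f) 1 := by
  intro x
  unfold w0
  congr 1
  funext s
  rw [show x + 1 + s = x + s + 1 by ring, hφper, hφper]

lemma qA_per (φ : ℝ → ℝ) (hφper : ∀ x, φ (x + 1) = φ x) :
    Function.Periodic (qA φ) 1 := by
  intro x
  unfold qA
  congr 1
  funext s
  rw [show x + 1 + s = x + s + 1 by ring, hφper, hφper]

/-! ### Zero-order identities -/

lemma w0_zero (φ : ℝ → ℝ) (hφper : ∀ x, φ (x + 1) = φ x) (y : ℝ) :
    w0 φ 0 y = AA φ * Real.exp (-φ y) := by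
  unfold w0
  have h1 : (fun s => Real.exp (φ (y + s) - φ y - 0 * s))
      = fun s => (fun t => Real.exp (φ t)) (y + s) * Real.exp (-φ y) := by
    funext s
    rw [← Real.exp_add]
    ring_nf
  rw [h1, intervalIntegral.integral_mul_const,
    shift01 (fun t => Real.exp (φ t)) (fun x => by simp [hφper x]) y]
  rfl

lemma M0_zero (φ : ℝ → ℝ) (hφper : ∀ x, φ (x + 1) = φ x) :
    M0 φ 0 = AA φ * BB φ := by
  unfold M0
  have h1 : (fun x => w0 φ 0 x) = fun x => AA φ * Real.exp (-φ x) := by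
    funext x; exact w0_zero φ hφper x
  rw [h1, intervalIntegral.integral_const_mul]
  rfl

/-! ### Bounds.  `M` is a global bound for `|φ|`, `K = exp (2M)` -/

lemma phi_bound (φ : ℝ → ℝ) (hφc : Continuous φ) (hφper : ∀ x, φ (x + 1) = φ x) :
    ∃ M : ℝ, 0 ≤ M ∧ ∀ x, |φ x| ≤ M := by
  obtain ⟨C, hC⟩ := (isCompact_Icc (a := (0:ℝ)) (b := 1)).exists_bound_of_continuousOn
    hφc.continuousOn
  refine ⟨max C 0, le_max_right _ _, fun x => ?_⟩
  have hper : Function.Periodic φ 1 := hφper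
  have h1 : φ x = φ (Int.fract x) := by
    have h2 := hper.sub_zsmul_eq (x := x) ⌊x⌋
    rw [Int.fract]
    simpa using h2.symm
  rw [h1]
  exact le_trans (hC _ ⟨Int.fract_nonneg x, (Int.fract_lt_one x).le⟩) (le_max_left _ _)

section WithBound

variable (φ : ℝ → ℝ) (M : ℝ)

lemma exp_diff_le (hM : ∀ x, |φ x| ≤ M) (a b : ℝ) : Real.exp (φ a - φ b) ≤ Real.exp (2 * M) := by
  apply Real.exp_le_exp.2
  have := abs_le.1 (hM a); have := abs_le.1 (hM b); linarith

lemma K_ge_one (hM : ∀ x, |φ x| ≤ M) : (1:ℝ) ≤ Real.exp (2 * M) := by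
  have h0 : 0 ≤ M := le_trans (abs_nonneg _) (hM 0)
  simpa using Real.exp_le_exp.2 (by linarith : (0:ℝ) ≤ 2 * M)

lemma qA_bound (hM : ∀ x, |φ x| ≤ M) (y : ℝ) : |qA φ y| ≤ Real.exp (2 * M) := by
  have h := intervalIntegral.norm_integral_le_of_norm_le_const
    (C := Real.exp (2 * M)) (a := (0:ℝ)) (b := 1)
    (f := fun s => s * Real.exp (φ (y + s) - φ y)) ?_
  · simpa [qA] using h
  · intro s hs
    rw [Set.uIoc_of_le (by norm_num : (0:ℝ) ≤ 1)] at hs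
    have h1 : |s| ≤ 1 := by
      rw [abs_le]; constructor <;> [linarith [hs.1.le]; exact hs.2]
    have h2 : Real.exp (φ (y + s) - φ y) ≤ Real.exp (2*M) := exp_diff_le φ M hM _ _
    have h3 : (0:ℝ) < Real.exp (φ (y + s) - φ y) := Real.exp_pos _
    rw [Real.norm_eq_abs, abs_mul, abs_of_pos h3]
    nlinarith [abs_nonneg s]

lemma w0_bound (hM : ∀ x, |φ x| ≤ M) (f : ℝ) (hf : |f| ≤ 1) (y : ℝ) : |w0 φ f y| ≤ 3 * Real.exp (2 * M) := by
  have h := intervalIntegral.norm_integral_le_of_norm_le_const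
    (C := 3 * Real.exp (2 * M)) (a := (0:ℝ)) (b := 1)
    (f := fun s => Real.exp (φ (y + s) - φ y - f * s)) ?_
  · simpa [w0] using h
  · intro s hs
    rw [Set.uIoc_of_le (by norm_num : (0:ℝ) ≤ 1)] at hs
    have h1 : |f * s| ≤ 1 := by
      rw [abs_mul]
      have : |s| ≤ 1 := by rw [abs_le]; constructor <;> [linarith [hs.1.le]; exact hs.2]
      nlinarith [abs_nonneg f, abs_nonneg s]
    have h2 : φ (y + s) - φ y - f * s ≤ 2 * M + 1 := by
      have := abs_le.1 (hM (y+s)); have := abs_le.1 (hM y); have := abs_le.1 h1; linarith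
    rw [Real.norm_eq_abs, abs_of_pos (Real.exp_pos _)]
    calc Real.exp (φ (y + s) - φ y - f * s) ≤ Real.exp (2 * M + 1) := Real.exp_le_exp.2 h2
      _ = Real.exp (2*M) * Real.exp 1 := by rw [Real.exp_add]
      _ ≤ 3 * Real.exp (2*M) := by
          nlinarith [Real.exp_one_lt_d9, Real.exp_pos (2*M)]

lemma AA_ge (hφc : Continuous φ) (hM : ∀ x, |φ x| ≤ M) : Real.exp (-M) ≤ AA φ := by
  unfold AA
  calc Real.exp (-M) = ∫ _x in (0:ℝ)..1, Real.exp (-M) := by simp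
    _ ≤ _ := by
        apply intervalIntegral.integral_mono_on (by norm_num)
          (by simp) ((Real.continuous_exp.comp (by fun_prop (disch := exact hφc))).intervalIntegrable 0 1)
        intro x _
        exact Real.exp_le_exp.2 (by linarith [abs_le.1 (hM x)])

lemma AA_le (hφc : Continuous φ) (hM : ∀ x, |φ x| ≤ M) : AA φ ≤ Real.exp M := by
  unfold AA
  calc (∫ x in (0:ℝ)..1, Real.exp (φ x)) ≤ ∫ _x in (0:ℝ)..1, Real.exp M := by
        apply intervalIntegral.integral_mono_on (by norm_num)
          ((Real.continuous_exp.comp (by fun_prop (disch := exact hφc))).intervalIntegrable 0 1) (by simp)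
        intro x _
        exact Real.exp_le_exp.2 (by linarith [abs_le.1 (hM x)])
    _ = Real.exp M := by simp

lemma BB_ge (hφc : Continuous φ) (hM : ∀ x, |φ x| ≤ M) : Real.exp (-M) ≤ BB φ := by
  unfold BB
  calc Real.exp (-M) = ∫ _x in (0:ℝ)..1, Real.exp (-M) := by simp
    _ ≤ _ := by
        apply intervalIntegral.integral_mono_on (by norm_num)
          (by simp) ((Real.continuous_exp.comp (by fun_prop (disch := exact hφc))).intervalIntegrable 0 1)
        intro x _
        exact Real.exp_le_exp.2 (show -M ≤ -φ x by linarith [abs_le.1 (hM x)])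

lemma BB_le (hφc : Continuous φ) (hM : ∀ x, |φ x| ≤ M) : BB φ ≤ Real.exp M := by
  unfold BB
  calc (∫ x in (0:ℝ)..1, Real.exp (-φ x)) ≤ ∫ _x in (0:ℝ)..1, Real.exp M := by
        apply intervalIntegral.integral_mono_on (by norm_num)
          ((Real.continuous_exp.comp (by fun_prop (disch := exact hφc))).intervalIntegrable 0 1) (by simp)
        intro x _
        exact Real.exp_le_exp.2 (show -φ x ≤ M by linarith [abs_le.1 (hM x)])
    _ = Real.exp M := by simp

end WithBound

/-! ### First-order expansions with quadratic error -/

section Expansions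

variable (φ : ℝ → ℝ)

/-- pointwise: `|e^(c-t) - e^c + t e^c| ≤ e^c t²` for `|t| ≤ 1`. -/
lemma exp_lin_bound (c t : ℝ) (ht : |t| ≤ 1) :
    |Real.exp (c - t) - Real.exp c + t * Real.exp c| ≤ Real.exp c * t ^ 2 := by
  have h1 : Real.exp (c - t) - Real.exp c + t * Real.exp c
      = Real.exp c * (Real.exp (-t) - 1 - (-t)) := by
    rw [Real.exp_sub, Real.exp_neg]
    field_simp
    ring
  rw [h1, abs_mul, abs_of_pos (Real.exp_pos c)]
  have h2 := Real.abs_exp_sub_one_sub_id_le (x := -t) (by simpa using ht)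
  have h3 : (-t) ^ 2 = t ^ 2 := by ring
  nlinarith [Real.exp_pos c]

lemma w0_expand (hφc : Continuous φ) (M : ℝ) (hM : ∀ x, |φ x| ≤ M)
    (f : ℝ) (hf : |f| ≤ 1) (y : ℝ) :
    |w0 φ f y - w0 φ 0 y + f * qA φ y| ≤ Real.exp (2 * M) * f ^ 2 := by
  have hK := K_ge_one φ M hM
  have hi1 : IntervalIntegrable (fun s => Real.exp (φ (y + s) - φ y - f * s)) volume 0 1 :=
    (Continuous.intervalIntegrable (by fun_prop (disch := exact hφc)) 0 1)
  have hi2 : IntervalIntegrable (fun s => Real.exp (φ (y + s) - φ y - 0 * s)) volume 0 1 :=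
    (Continuous.intervalIntegrable (by fun_prop (disch := exact hφc)) 0 1)
  have hi3 : IntervalIntegrable (fun s => f * (s * Real.exp (φ (y + s) - φ y))) volume 0 1 :=
    (Continuous.intervalIntegrable (by fun_prop (disch := exact hφc)) 0 1)
  have hsplit : w0 φ f y - w0 φ 0 y + f * qA φ y
      = ∫ s in (0:ℝ)..1, (Real.exp (φ (y + s) - φ y - f * s)
          - Real.exp (φ (y + s) - φ y - 0 * s) + f * (s * Real.exp (φ (y + s) - φ y))) := by
    unfold w0 qA
    rw [intervalIntegral.integral_add (hi1.sub hi2) hi3, intervalIntegral.integral_sub hi1 hi2,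
      intervalIntegral.integral_const_mul]
  rw [hsplit]
  have h := intervalIntegral.norm_integral_le_of_norm_le_const
    (C := Real.exp (2 * M) * f ^ 2) (a := (0:ℝ)) (b := 1)
    (f := fun s => (Real.exp (φ (y + s) - φ y - f * s)
          - Real.exp (φ (y + s) - φ y - 0 * s) + f * (s * Real.exp (φ (y + s) - φ y)))) ?_
  · simpa using h
  · intro s hs
    rw [Set.uIoc_of_le (by norm_num : (0:ℝ) ≤ 1)] at hs
    have hs1 : 0 < s := hs.1
    have hs2 : s ≤ 1 := hs.2
    have hts : |f * s| ≤ 1 := by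
      rw [abs_mul]
      have : |s| ≤ 1 := by rw [abs_le]; constructor <;> linarith
      nlinarith [abs_nonneg f, abs_nonneg s]
    have h1 := exp_lin_bound (φ (y + s) - φ y) (f * s) hts
    have h2 : Real.exp (φ (y + s) - φ y) ≤ Real.exp (2 * M) := exp_diff_le φ M hM _ _
    rw [Real.norm_eq_abs]
    have h3 : Real.exp (φ (y + s) - φ y - f * s)
        - Real.exp (φ (y + s) - φ y - 0 * s) + f * (s * Real.exp (φ (y + s) - φ y))
        = Real.exp ((φ (y + s) - φ y) - f * s) - Real.exp (φ (y + s) - φ y)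
          + (f * s) * Real.exp (φ (y + s) - φ y) := by ring_nf
    show |Real.exp (φ (y + s) - φ y - f * s)
          - Real.exp (φ (y + s) - φ y - 0 * s) + f * (s * Real.exp (φ (y + s) - φ y))| ≤ _
    rw [h3]
    calc |_| ≤ Real.exp (φ (y + s) - φ y) * (f * s) ^ 2 := h1
      _ ≤ Real.exp (2 * M) * f ^ 2 := by
          have hs3 : s ^ 2 ≤ 1 := by nlinarith
          have hss : (f * s) ^ 2 ≤ f ^ 2 := by
            have := mul_le_mul_of_nonneg_left hs3 (sq_nonneg f)
            calc (f * s) ^ 2 = f ^ 2 * s ^ 2 := by ring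
              _ ≤ f ^ 2 * 1 := this
              _ = f ^ 2 := by ring
          exact mul_le_mul h2 hss (sq_nonneg _) (Real.exp_pos _).le

lemma M0_expand (hφc : Continuous φ) (hφper : ∀ x, φ (x + 1) = φ x)
    (M : ℝ) (hM : ∀ x, |φ x| ≤ M) (f : ℝ) (hf : |f| ≤ 1) :
    |M0 φ f - (AA φ * BB φ - f * QQ φ)| ≤ Real.exp (2 * M) * f ^ 2 := by
  have hi1 : IntervalIntegrable (w0 φ f) volume 0 1 :=
    (cont_w0 φ hφc f).intervalIntegrable 0 1
  have hi2 : IntervalIntegrable (w0 φ 0) volume 0 1 :=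
    (cont_w0 φ hφc 0).intervalIntegrable 0 1
  have hi3 : IntervalIntegrable (fun x => f * qA φ x) volume 0 1 :=
    (Continuous.intervalIntegrable (by exact continuous_const.mul (cont_qA φ hφc)) 0 1)
  have hsplit : M0 φ f - (AA φ * BB φ - f * QQ φ)
      = ∫ x in (0:ℝ)..1, (w0 φ f x - w0 φ 0 x + f * qA φ x) := by
    rw [intervalIntegral.integral_add (hi1.sub hi2) hi3, intervalIntegral.integral_sub hi1 hi2,
      intervalIntegral.integral_const_mul]
    have : M0 φ 0 = AA φ * BB φ := M0_zero φ hφper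
    unfold M0 QQ at *
    linarith [this]
  rw [hsplit]
  have h := intervalIntegral.norm_integral_le_of_norm_le_const
    (C := Real.exp (2 * M) * f ^ 2) (a := (0:ℝ)) (b := 1)
    (f := fun x => (w0 φ f x - w0 φ 0 x + f * qA φ x)) ?_
  · simpa using h
  · intro x _
    rw [Real.norm_eq_abs]
    exact w0_expand φ hφc M hM f hf x

/-- cubic bound for `exp (-f)`. -/
lemma exp_cubic_bound (f : ℝ) (hf : |f| ≤ 1) :
    |Real.exp (-f) - (1 - f + f ^ 2 / 2)| ≤ |f| ^ 3 := by
  have h := Real.exp_bound (x := -f) (by simpa using hf) (n := 3) (by norm_num)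
  have h2 : ∑ m ∈ Finset.range 3, (-f) ^ m / (m.factorial : ℝ) = 1 - f + f ^ 2 / 2 := by
    norm_num [Finset.sum_range_succ]
    ring
  rw [h2] at h
  have h3 : |(-f)| = |f| := abs_neg f
  rw [h3] at h
  norm_num [Nat.factorial] at h
  nlinarith [abs_nonneg f, pow_nonneg (abs_nonneg f) 3]

/-! ### Expansion of `M1` -/

noncomputable def lin1 (φ : ℝ → ℝ) (x s : ℝ) : ℝ :=
  (-(2 * w0 φ 0 (x + s) * qA φ (x + s)) - s * (w0 φ 0 (x + s)) ^ 2) *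
    Real.exp (φ (x + s) - φ x)

noncomputable def MZ (φ : ℝ → ℝ) : ℝ :=
  ∫ x in (0:ℝ)..1, ∫ s in (0:ℝ)..1, (w0 φ 0 (x + s)) ^ 2 * Real.exp (φ (x + s) - φ x)

noncomputable def ML (φ : ℝ → ℝ) : ℝ := ∫ x in (0:ℝ)..1, ∫ s in (0:ℝ)..1, lin1 φ x s

set_option maxHeartbeats 1000000 in
/-- purely algebraic estimate used for the pointwise expansion of the `M1`-integrand. -/
lemma abstract_bound (K f s u u0 qy k ε : ℝ) (hK : 1 ≤ K) (hf : |f| ≤ 1)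
    (hs1 : 0 < s) (hs2 : s ≤ 1) (hkpos : 0 < k) (hkK : k ≤ K)
    (hrK : |u - u0 + f * qy| ≤ K * f ^ 2) (hεb : |ε| ≤ f ^ 2)
    (huK : |u| ≤ 3 * K) (hu0K : |u0| ≤ 3 * K) (hqK : |qy| ≤ K) :
    |u ^ 2 * (k * (1 - f * s + ε)) - u0 ^ 2 * k - f * ((-(2 * u0 * qy) - s * u0 ^ 2) * k)|
      ≤ 30 * K ^ 3 * f ^ 2 := by
  have habs2 : f ^ 2 ≤ |f| := by nlinarith [sq_abs f, abs_nonneg f]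
  have hK0 : (0:ℝ) < K := lt_of_lt_of_le zero_lt_one hK
  set r := u - u0 + f * qy with hr
  set E := u ^ 2 * (1 - f * s + ε) - u0 ^ 2 + f * (2 * u0 * qy + s * u0 ^ 2) with hE
  have hmain : u ^ 2 * (k * (1 - f * s + ε)) - u0 ^ 2 * k
      - f * ((-(2 * u0 * qy) - s * u0 ^ 2) * k) = k * E := by rw [hE]; ring
  have hEid : E = r * (u + u0) + f * qy * (f * qy - r) + (-(f * s * (u ^ 2 - u0 ^ 2)))
      + u ^ 2 * ε := by rw [hE, hr]; ring
  have hdiff : |u - u0| ≤ 2 * K * |f| := by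
    have h0 : u - u0 = r - f * qy := by rw [hr]; ring
    rw [h0]
    calc |r - f * qy| ≤ |r| + |f * qy| := abs_sub _ _
      _ ≤ K * f ^ 2 + |f| * K := by rw [abs_mul]; gcongr
      _ ≤ 2 * K * |f| := by nlinarith [abs_nonneg f]
  have ht1 : |r * (u + u0)| ≤ 6 * K ^ 2 * f ^ 2 := by
    rw [abs_mul]
    have h1 : |u + u0| ≤ 6 * K := by
      calc |u + u0| ≤ |u| + |u0| := abs_add_le _ _
        _ ≤ 6 * K := by linarith
    calc |r| * |u + u0| ≤ (K * f ^ 2) * (6 * K) := by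
          apply mul_le_mul hrK h1 (abs_nonneg _) (by positivity)
      _ = 6 * K ^ 2 * f ^ 2 := by ring
  have ht2 : |f * qy * (f * qy - r)| ≤ 2 * K ^ 2 * f ^ 2 := by
    rw [abs_mul, abs_mul]
    have h1 : |f * qy - r| ≤ K * |f| + K * f ^ 2 := by
      calc |f * qy - r| ≤ |f * qy| + |r| := abs_sub _ _
        _ ≤ |f| * K + K * f ^ 2 := by rw [abs_mul]; gcongr
        _ = K * |f| + K * f ^ 2 := by ring
    calc |f| * |qy| * |f * qy - r| ≤ |f| * K * (K * |f| + K * f ^ 2) := by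
          apply mul_le_mul _ h1 (abs_nonneg _) (by positivity)
          exact mul_le_mul_of_nonneg_left hqK (abs_nonneg f)
      _ = K ^ 2 * (|f| * |f|) + K ^ 2 * (|f| * f ^ 2) := by ring
      _ ≤ 2 * K ^ 2 * f ^ 2 := by
          have e1 : |f| * |f| = f ^ 2 := by rw [← abs_mul, abs_mul_self]; ring
          have e2 : |f| * f ^ 2 ≤ f ^ 2 := by nlinarith [sq_nonneg f, abs_nonneg f]
          nlinarith [sq_nonneg K]
  have ht3 : |(-(f * s * (u ^ 2 - u0 ^ 2)))| ≤ 12 * K ^ 2 * f ^ 2 := by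
    rw [abs_neg, abs_mul, abs_mul]
    have h1 : |u ^ 2 - u0 ^ 2| ≤ 6 * K * (2 * K * |f|) := by
      have h0 : u ^ 2 - u0 ^ 2 = (u + u0) * (u - u0) := by ring
      rw [h0, abs_mul]
      apply mul_le_mul _ hdiff (abs_nonneg _) (by positivity)
      calc |u + u0| ≤ |u| + |u0| := abs_add_le _ _
        _ ≤ 6 * K := by linarith
    have hsabs : |s| ≤ 1 := by rw [abs_le]; constructor <;> linarith
    calc |f| * |s| * |u ^ 2 - u0 ^ 2| ≤ |f| * 1 * (6 * K * (2 * K * |f|)) := by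
          apply mul_le_mul _ h1 (abs_nonneg _) (by positivity)
          exact mul_le_mul_of_nonneg_left hsabs (abs_nonneg f)
      _ = 12 * K ^ 2 * (|f| * |f|) := by ring
      _ = 12 * K ^ 2 * f ^ 2 := by rw [← abs_mul, abs_mul_self]; ring
  have ht4 : |u ^ 2 * ε| ≤ 9 * K ^ 2 * f ^ 2 := by
    rw [abs_mul, abs_pow]
    have h1 : |u| ^ 2 ≤ (3 * K) ^ 2 := by nlinarith [abs_nonneg u]
    calc |u| ^ 2 * |ε| ≤ (3 * K) ^ 2 * f ^ 2 :=
          mul_le_mul h1 hεb (abs_nonneg _) (by positivity)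
      _ = 9 * K ^ 2 * f ^ 2 := by ring
  have hEb : |E| ≤ 30 * K ^ 2 * f ^ 2 := by
    rw [hEid]
    calc |r * (u + u0) + f * qy * (f * qy - r) + (-(f * s * (u ^ 2 - u0 ^ 2))) + u ^ 2 * ε|
        ≤ |r * (u + u0) + f * qy * (f * qy - r) + (-(f * s * (u ^ 2 - u0 ^ 2)))| + |u ^ 2 * ε| :=
          abs_add_le _ _
      _ ≤ |r * (u + u0) + f * qy * (f * qy - r)| + |(-(f * s * (u ^ 2 - u0 ^ 2)))|
            + |u ^ 2 * ε| := by gcongr ?_ + _; exact abs_add_le _ _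
      _ ≤ |r * (u + u0)| + |f * qy * (f * qy - r)| + |(-(f * s * (u ^ 2 - u0 ^ 2)))|
            + |u ^ 2 * ε| := by gcongr ?_ + _ + _; exact abs_add_le _ _
      _ ≤ 30 * K ^ 2 * f ^ 2 := by
          have hpos : (0:ℝ) ≤ K ^ 2 * f ^ 2 := by positivity
          linarith
  rw [hmain, abs_mul, abs_of_pos hkpos]
  calc k * |E| ≤ K * (30 * K ^ 2 * f ^ 2) :=
        mul_le_mul hkK hEb (abs_nonneg _) (by positivity)
    _ = 30 * K ^ 3 * f ^ 2 := by ring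

lemma G_expand (φ : ℝ → ℝ) (hφc : Continuous φ) (M : ℝ) (hM : ∀ x, |φ x| ≤ M)
    (f : ℝ) (hf : |f| ≤ 1) (x s : ℝ) (hs1 : 0 < s) (hs2 : s ≤ 1) :
    |(w0 φ f (x + s)) ^ 2 * Real.exp (φ (x + s) - φ x - f * s)
      - (w0 φ 0 (x + s)) ^ 2 * Real.exp (φ (x + s) - φ x) - f * lin1 φ x s|
      ≤ 30 * Real.exp (2 * M) ^ 3 * f ^ 2 := by
  have hfs : |f * s| ≤ 1 := by
    rw [abs_mul]
    have : |s| ≤ 1 := by rw [abs_le]; constructor <;> linarith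
    nlinarith [abs_nonneg f, abs_nonneg s]
  have hεb : |Real.exp (-(f * s)) - 1 + f * s| ≤ f ^ 2 := by
    have h := Real.abs_exp_sub_one_sub_id_le (x := -(f*s)) (by simpa using hfs)
    have h2 : Real.exp (-(f * s)) - 1 - (-(f*s)) = Real.exp (-(f * s)) - 1 + f * s := by ring
    rw [h2] at h
    have hss : s ^ 2 ≤ 1 := by nlinarith
    nlinarith [sq_nonneg f]
  have hexp : Real.exp (φ (x + s) - φ x - f * s)
      = Real.exp (φ (x + s) - φ x) * (1 - f * s + (Real.exp (-(f * s)) - 1 + f * s)) := by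
    rw [show φ (x + s) - φ x - f * s = (φ (x + s) - φ x) + (-(f * s)) by ring, Real.exp_add]
    ring
  rw [hexp, lin1]
  exact abstract_bound (Real.exp (2 * M)) f s (w0 φ f (x + s)) (w0 φ 0 (x + s))
    (qA φ (x + s)) (Real.exp (φ (x + s) - φ x)) (Real.exp (-(f * s)) - 1 + f * s)
    (K_ge_one φ M hM) hf hs1 hs2 (Real.exp_pos _) (exp_diff_le φ M hM _ _)
    (w0_expand φ hφc M hM f hf _) hεb (w0_bound φ M hM f hf _)
    (w0_bound φ M hM 0 (by norm_num) _) (qA_bound φ M hM _)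

lemma M1_expand (φ : ℝ → ℝ) (hφc : Continuous φ) (M : ℝ) (hM : ∀ x, |φ x| ≤ M)
    (f : ℝ) (hf : |f| ≤ 1) :
    |M1 φ f - (MZ φ + f * ML φ)| ≤ 30 * Real.exp (2 * M) ^ 3 * f ^ 2 := by
  have hw0f : Continuous (w0 φ f) := cont_w0 φ hφc f
  have hw00 : Continuous (w0 φ 0) := cont_w0 φ hφc 0
  have hq : Continuous (qA φ) := cont_qA φ hφc
  have hadd : Continuous (fun p : ℝ × ℝ => p.1 + p.2) := continuous_fst.add continuous_snd
  have hGc : Continuous (fun p : ℝ × ℝ =>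
      (w0 φ f (p.1 + p.2)) ^ 2 * Real.exp (φ (p.1 + p.2) - φ p.1 - f * p.2)) :=
    ((hw0f.comp hadd).pow 2).mul (Real.continuous_exp.comp
      (((hφc.comp hadd).sub (hφc.comp continuous_fst)).sub (continuous_const.mul continuous_snd)))
  have hmainc : Continuous (fun p : ℝ × ℝ =>
      (w0 φ 0 (p.1 + p.2)) ^ 2 * Real.exp (φ (p.1 + p.2) - φ p.1)) :=
    ((hw00.comp hadd).pow 2).mul (Real.continuous_exp.comp
      ((hφc.comp hadd).sub (hφc.comp continuous_fst)))
  have hlinc : Continuous (fun p : ℝ × ℝ => lin1 φ p.1 p.2) := by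
    simp only [lin1]
    exact ((((continuous_const.mul (hw00.comp hadd)).mul (hq.comp hadd)).neg).sub
      (continuous_snd.mul ((hw00.comp hadd).pow 2))).mul
      (Real.continuous_exp.comp ((hφc.comp hadd).sub (hφc.comp continuous_fst)))
  -- inner-integral functions of x
  have hw1c : Continuous (w1 φ f) := by
    unfold w1
    exact intervalIntegral.continuous_parametric_intervalIntegral_of_continuous'
      (f := fun x s => (w0 φ f (x + s)) ^ 2 * Real.exp (φ (x + s) - φ x - f * s)) hGc 0 1
  have hI2c : Continuous (fun x => ∫ s in (0:ℝ)..1,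
      (w0 φ 0 (x + s)) ^ 2 * Real.exp (φ (x + s) - φ x)) :=
    intervalIntegral.continuous_parametric_intervalIntegral_of_continuous'
      (f := fun x s => (w0 φ 0 (x + s)) ^ 2 * Real.exp (φ (x + s) - φ x)) hmainc 0 1
  have hI3c : Continuous (fun x => ∫ s in (0:ℝ)..1, lin1 φ x s) :=
    intervalIntegral.continuous_parametric_intervalIntegral_of_continuous'
      (f := fun x s => lin1 φ x s) hlinc 0 1
  -- inner estimate
  have hinner : ∀ x : ℝ, |w1 φ f x - (∫ s in (0:ℝ)..1,
      (w0 φ 0 (x + s)) ^ 2 * Real.exp (φ (x + s) - φ x)) - f * ∫ s in (0:ℝ)..1, lin1 φ x s|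
      ≤ 30 * Real.exp (2 * M) ^ 3 * f ^ 2 := by
    intro x
    have hiG : IntervalIntegrable (fun s => (w0 φ f (x + s)) ^ 2
        * Real.exp (φ (x + s) - φ x - f * s)) volume 0 1 :=
      (hGc.comp (Continuous.prodMk_right x)).intervalIntegrable 0 1
    have him : IntervalIntegrable (fun s => (w0 φ 0 (x + s)) ^ 2
        * Real.exp (φ (x + s) - φ x)) volume 0 1 :=
      (hmainc.comp (Continuous.prodMk_right x)).intervalIntegrable 0 1
    have hil : IntervalIntegrable (fun s => f * lin1 φ x s) volume 0 1 :=
      (continuous_const.mul (hlinc.comp (Continuous.prodMk_right x))).intervalIntegrable 0 1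
    have hsplit : w1 φ f x - (∫ s in (0:ℝ)..1,
        (w0 φ 0 (x + s)) ^ 2 * Real.exp (φ (x + s) - φ x)) - f * ∫ s in (0:ℝ)..1, lin1 φ x s
        = ∫ s in (0:ℝ)..1, ((w0 φ f (x + s)) ^ 2 * Real.exp (φ (x + s) - φ x - f * s)
            - (w0 φ 0 (x + s)) ^ 2 * Real.exp (φ (x + s) - φ x) - f * lin1 φ x s) := by
      rw [intervalIntegral.integral_sub (hiG.sub him) hil,
        intervalIntegral.integral_sub hiG him, intervalIntegral.integral_const_mul]
      rfl
    rw [hsplit]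
    have h := intervalIntegral.norm_integral_le_of_norm_le_const
      (C := 30 * Real.exp (2 * M) ^ 3 * f ^ 2) (a := (0:ℝ)) (b := 1)
      (f := fun s => ((w0 φ f (x + s)) ^ 2 * Real.exp (φ (x + s) - φ x - f * s)
            - (w0 φ 0 (x + s)) ^ 2 * Real.exp (φ (x + s) - φ x) - f * lin1 φ x s)) ?_
    · simpa using h
    · intro s hs
      rw [Set.uIoc_of_le (by norm_num : (0:ℝ) ≤ 1)] at hs
      rw [Real.norm_eq_abs]
      exact G_expand φ hφc M hM f hf x s hs.1 hs.2
  -- outer estimate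
  have hsplit2 : M1 φ f - (MZ φ + f * ML φ)
      = ∫ x in (0:ℝ)..1, (w1 φ f x - (∫ s in (0:ℝ)..1,
          (w0 φ 0 (x + s)) ^ 2 * Real.exp (φ (x + s) - φ x))
          - f * ∫ s in (0:ℝ)..1, lin1 φ x s) := by
    rw [intervalIntegral.integral_sub (show IntervalIntegrable (fun x => w1 φ f x - (∫ s in (0:ℝ)..1,
            (w0 φ 0 (x + s)) ^ 2 * Real.exp (φ (x + s) - φ x))) volume 0 1 from
          Continuous.intervalIntegrable (hw1c.sub hI2c) 0 1)
        (show IntervalIntegrable (fun x => f * ∫ s in (0:ℝ)..1, lin1 φ x s) volume 0 1 from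
          (continuous_const.mul hI3c).intervalIntegrable 0 1),
      intervalIntegral.integral_sub (hw1c.intervalIntegrable 0 1) (hI2c.intervalIntegrable 0 1),
      intervalIntegral.integral_const_mul]
    unfold M1 MZ ML
    ring
  rw [hsplit2]
  have h := intervalIntegral.norm_integral_le_of_norm_le_const
    (C := 30 * Real.exp (2 * M) ^ 3 * f ^ 2) (a := (0:ℝ)) (b := 1)
    (f := fun x => (w1 φ f x - (∫ s in (0:ℝ)..1,
          (w0 φ 0 (x + s)) ^ 2 * Real.exp (φ (x + s) - φ x))
          - f * ∫ s in (0:ℝ)..1, lin1 φ x s)) ?_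
  · simpa using h
  · intro x _
    rw [Real.norm_eq_abs]
    exact hinner x

/-! ### Fubini on the unit square -/

lemma fubini01 (F : ℝ → ℝ → ℝ) (hF : Continuous (Function.uncurry F)) :
    ∫ x in (0:ℝ)..1, ∫ s in (0:ℝ)..1, F x s = ∫ s in (0:ℝ)..1, ∫ x in (0:ℝ)..1, F x s := by
  have h1 : ∀ G : ℝ → ℝ → ℝ, (∫ x in (0:ℝ)..1, ∫ s in (0:ℝ)..1, G x s)
      = ∫ x in Set.Ioc (0:ℝ) 1, ∫ s in Set.Ioc (0:ℝ) 1, G x s := by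
    intro G
    rw [intervalIntegral.integral_of_le (by norm_num : (0:ℝ) ≤ 1)]
    congr 1
    ext x
    rw [intervalIntegral.integral_of_le (by norm_num : (0:ℝ) ≤ 1)]
  rw [h1, h1 (fun s x => F x s)]
  have hint : Integrable (Function.uncurry F)
      ((volume.restrict (Set.Ioc (0:ℝ) 1)).prod (volume.restrict (Set.Ioc (0:ℝ) 1))) := by
    rw [Measure.prod_restrict]
    have h2 : IntegrableOn (Function.uncurry F) (Set.Icc (0:ℝ) 1 ×ˢ Set.Icc (0:ℝ) 1)
        (volume.prod volume) :=
      hF.continuousOn.integrableOn_compact (isCompact_Icc.prod isCompact_Icc)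
    exact h2.mono_set (Set.prod_mono Set.Ioc_subset_Icc_self Set.Ioc_subset_Icc_self)
  exact MeasureTheory.integral_integral_swap hint

/-! ### the symmetry `∫∫ s e^{-φ(x)-φ(x+s)} = B²/2` -/

lemma TT_eq (φ : ℝ → ℝ) (hφc : Continuous φ) (hφper : ∀ x, φ (x + 1) = φ x) :
    (∫ x in (0:ℝ)..1, Real.exp (-φ x) * ∫ s in (0:ℝ)..1, s * Real.exp (-φ (x + s)))
      = BB φ ^ 2 / 2 := by
  have hperexp : Function.Periodic (fun t => Real.exp (-φ t)) 1 := fun x => by simp [hφper x]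
  set cc : ℝ → ℝ := fun s => ∫ x in (0:ℝ)..1, Real.exp (-φ x) * Real.exp (-φ (x + s)) with hcc
  have hccc : Continuous cc := by
    rw [hcc]
    exact intervalIntegral.continuous_parametric_intervalIntegral_of_continuous'
      (f := fun s x => Real.exp (-φ x) * Real.exp (-φ (x + s)))
      (by fun_prop (disch := exact hφc)) 0 1
  -- step 1 : Fubini
  have h1 : (∫ x in (0:ℝ)..1, Real.exp (-φ x) * ∫ s in (0:ℝ)..1, s * Real.exp (-φ (x + s)))
      = ∫ s in (0:ℝ)..1, s * cc s := by
    have e1 : ∀ x : ℝ, Real.exp (-φ x) * (∫ s in (0:ℝ)..1, s * Real.exp (-φ (x + s)))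
        = ∫ s in (0:ℝ)..1, Real.exp (-φ x) * (s * Real.exp (-φ (x + s))) :=
      fun x => (intervalIntegral.integral_const_mul _ _).symm
    rw [intervalIntegral.integral_congr (fun x _ => e1 x)]
    rw [fubini01 (fun x s => Real.exp (-φ x) * (s * Real.exp (-φ (x + s))))
      (by fun_prop (disch := exact hφc))]
    apply intervalIntegral.integral_congr
    intro s _
    show (∫ x in (0:ℝ)..1, Real.exp (-φ x) * (s * Real.exp (-φ (x + s)))) = s * cc s
    have e2 : ∀ x : ℝ, Real.exp (-φ x) * (s * Real.exp (-φ (x + s)))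
        = s * (Real.exp (-φ x) * Real.exp (-φ (x + s))) := fun x => by ring
    rw [intervalIntegral.integral_congr (fun x _ => e2 x), intervalIntegral.integral_const_mul]
  -- step 2 : symmetry of cc
  have h2 : ∀ s : ℝ, cc (1 - s) = cc s := by
    intro s
    show (∫ x in (0:ℝ)..1, Real.exp (-φ x) * Real.exp (-φ (x + (1 - s))))
      = ∫ x in (0:ℝ)..1, Real.exp (-φ x) * Real.exp (-φ (x + s))
    have e1 : ∀ x : ℝ, Real.exp (-φ x) * Real.exp (-φ (x + (1 - s)))
        = (fun t => Real.exp (-φ (t + s)) * Real.exp (-φ t)) (x - s) := by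
      intro x
      have e2 : φ (x + (1 - s)) = φ (x - s) := by
        rw [show x + (1 - s) = (x - s) + 1 by ring, hφper]
      simp only [e2, sub_add_cancel]
      try ring
    rw [intervalIntegral.integral_congr (fun x _ => e1 x)]
    rw [shift01' (fun t => Real.exp (-φ (t + s)) * Real.exp (-φ t))
      (fun t => by simp only []; rw [show t + 1 + s = (t + s) + 1 by ring, hφper, hφper]) s]
    apply intervalIntegral.integral_congr
    intro x _
    simp only []
    ring
  -- step 3 : ∫ cc = BB²
  have h3 : (∫ s in (0:ℝ)..1, cc s) = BB φ ^ 2 := by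
    rw [hcc]
    rw [← fubini01 (fun x s => Real.exp (-φ x) * Real.exp (-φ (x + s)))
      (by fun_prop (disch := exact hφc))]
    have e1 : ∀ x : ℝ, (∫ s in (0:ℝ)..1, Real.exp (-φ x) * Real.exp (-φ (x + s)))
        = Real.exp (-φ x) * BB φ := by
      intro x
      rw [intervalIntegral.integral_const_mul,
        shift01 (fun t => Real.exp (-φ t)) hperexp x]
      rfl
    rw [intervalIntegral.integral_congr (fun x _ => e1 x)]
    rw [intervalIntegral.integral_mul_const]
    unfold BB
    ring
  -- step 4 : reflection
  have h4 : (∫ s in (0:ℝ)..1, s * cc s) = ∫ s in (0:ℝ)..1, (1 - s) * cc s := by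
    have e0 := intervalIntegral.integral_comp_sub_left (a := (0:ℝ)) (b := 1)
      (fun u => u * cc u) 1
    norm_num at e0
    rw [← e0]
    apply intervalIntegral.integral_congr
    intro s _
    simp only []
    rw [h2 s]
  have h5 : IntervalIntegrable (fun s => s * cc s) volume 0 1 :=
    (continuous_id.mul hccc).intervalIntegrable 0 1
  have h6 : IntervalIntegrable cc volume 0 1 := hccc.intervalIntegrable 0 1
  have h7 : (∫ s in (0:ℝ)..1, (1 - s) * cc s)
      = (∫ s in (0:ℝ)..1, cc s) - ∫ s in (0:ℝ)..1, s * cc s := by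
    rw [← intervalIntegral.integral_sub h6 h5]
    apply intervalIntegral.integral_congr
    intro s _
    simp only []
    ring
  rw [h1]
  have := h4
  rw [h7, h3] at this
  linarith

/-! ### identities for `MZ` and `ML` -/

lemma MZ_eq (φ : ℝ → ℝ) (hφc : Continuous φ) (hφper : ∀ x, φ (x + 1) = φ x) :
    MZ φ = (AA φ * BB φ) ^ 2 := by
  have hperexp : Function.Periodic (fun t => Real.exp (-φ t)) 1 := fun x => by simp [hφper x]
  unfold MZ
  have h1 : ∀ x : ℝ, (∫ s in (0:ℝ)..1, (w0 φ 0 (x + s)) ^ 2 * Real.exp (φ (x + s) - φ x))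
      = (AA φ ^ 2 * BB φ) * Real.exp (-φ x) := by
    intro x
    have hpt : ∀ s : ℝ, (w0 φ 0 (x + s)) ^ 2 * Real.exp (φ (x + s) - φ x)
        = (AA φ ^ 2 * Real.exp (-φ x)) * Real.exp (-φ (x + s)) := by
      intro s
      rw [w0_zero φ hφper]
      have ha := Real.exp_ne_zero (φ (x + s)); have hb := Real.exp_ne_zero (φ x)
      simp only [Real.exp_sub, Real.exp_neg]
      field_simp
    rw [intervalIntegral.integral_congr (fun s _ => hpt s), intervalIntegral.integral_const_mul,
      shift01 (fun t => Real.exp (-φ t)) hperexp x]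
    show AA φ ^ 2 * Real.exp (-φ x) * BB φ = _
    ring
  rw [intervalIntegral.integral_congr (fun x _ => h1 x), intervalIntegral.integral_const_mul]
  show AA φ ^ 2 * BB φ * BB φ = _
  ring

lemma ML_eq (φ : ℝ → ℝ) (hφc : Continuous φ) (hφper : ∀ x, φ (x + 1) = φ x) :
    ML φ = -(2 * AA φ * BB φ * QQ φ + (AA φ * BB φ) ^ 2 / 2) := by
  have hperexp : Function.Periodic (fun t => Real.exp (-φ t)) 1 := fun x => by simp [hφper x]
  have hq : Continuous (qA φ) := cont_qA φ hφc
  have htic : Continuous (fun x => ∫ s in (0:ℝ)..1, s * Real.exp (-φ (x + s))) :=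
    intervalIntegral.continuous_parametric_intervalIntegral_of_continuous'
      (f := fun x s => s * Real.exp (-φ (x + s))) (by fun_prop (disch := exact hφc)) 0 1
  unfold ML
  -- inner integral
  have h1 : ∀ x : ℝ, (∫ s in (0:ℝ)..1, lin1 φ x s)
      = -(2 * AA φ * QQ φ) * Real.exp (-φ x)
        - AA φ ^ 2 * (Real.exp (-φ x) * ∫ s in (0:ℝ)..1, s * Real.exp (-φ (x + s))) := by
    intro x
    have hpt : ∀ s : ℝ, lin1 φ x s
        = (-(2 * AA φ) * Real.exp (-φ x)) * qA φ (x + s)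
          - (AA φ ^ 2 * Real.exp (-φ x)) * (s * Real.exp (-φ (x + s))) := by
      intro s
      rw [lin1, w0_zero φ hφper]
      have ha := Real.exp_ne_zero (φ (x + s)); have hb := Real.exp_ne_zero (φ x)
      simp only [Real.exp_sub, Real.exp_neg]
      field_simp
    rw [intervalIntegral.integral_congr (fun s _ => hpt s)]
    have hi1 : IntervalIntegrable (fun s => (-(2 * AA φ) * Real.exp (-φ x)) * qA φ (x + s))
        volume 0 1 :=
      (continuous_const.mul (hq.comp (by fun_prop))).intervalIntegrable 0 1
    have hi2 : IntervalIntegrable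
        (fun s => (AA φ ^ 2 * Real.exp (-φ x)) * (s * Real.exp (-φ (x + s)))) volume 0 1 :=
      (continuous_const.mul (by fun_prop (disch := exact hφc))).intervalIntegrable 0 1
    rw [intervalIntegral.integral_sub hi1 hi2, intervalIntegral.integral_const_mul,
      intervalIntegral.integral_const_mul,
      shift01 (qA φ) (qA_per φ hφper) x]
    show -(2 * AA φ) * Real.exp (-φ x) * QQ φ - _ = _
    ring
  rw [intervalIntegral.integral_congr (fun x _ => h1 x)]
  have hi3 : IntervalIntegrable (fun x => -(2 * AA φ * QQ φ) * Real.exp (-φ x)) volume 0 1 :=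
    (continuous_const.mul (by fun_prop (disch := exact hφc))).intervalIntegrable 0 1
  have hi4 : IntervalIntegrable (fun x => AA φ ^ 2
      * (Real.exp (-φ x) * ∫ s in (0:ℝ)..1, s * Real.exp (-φ (x + s)))) volume 0 1 :=
    (continuous_const.mul ((by fun_prop (disch := exact hφc) : Continuous
      (fun x => Real.exp (-φ x))).mul htic)).intervalIntegrable 0 1
  rw [intervalIntegral.integral_sub hi3 hi4, intervalIntegral.integral_const_mul,
    intervalIntegral.integral_const_mul, TT_eq φ hφc hφper]
  show -(2 * AA φ * QQ φ) * BB φ - _ = _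
  ring

/-! ### numerator bound (pure algebra) -/

set_option maxHeartbeats 4000000 in
lemma num_bound (K P Q r0 r1 r2 f m0 : ℝ) (hK : 1 ≤ K) (hf : |f| ≤ 1)
    (hPK : |P| ≤ K) (hQ : |Q| ≤ K) (hr0 : |r0| ≤ K * f ^ 2)
    (hr1 : |r1| ≤ 30 * K ^ 3 * f ^ 2) (hr2 : |r2| ≤ |f| ^ 3)
    (hm0 : m0 = P - f * Q + r0) :
    |f * (P ^ 2 + f * (-(2 * P * Q + P ^ 2 / 2)) + r1) - (f - f ^ 2 / 2 + r2) * m0 ^ 2|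
      ≤ 60 * K ^ 3 * |f| ^ 3 := by
  have hK0 : (0:ℝ) < K := lt_of_lt_of_le zero_lt_one hK
  have ha2 : f ^ 2 = |f| ^ 2 := (sq_abs f).symm
  have ha0 : (0:ℝ) ≤ |f| := abs_nonneg f
  have ha3 : |f| ^ 3 ≤ |f| ^ 2 := by nlinarith
  have ha4 : |f| ^ 4 ≤ |f| ^ 3 := by nlinarith
  have hf2 : f ^ 2 ≤ 1 := by rw [ha2]; nlinarith
  have hr0' : |r0| ≤ K := le_trans hr0 (by nlinarith)
  have hm0b : |m0| ≤ 3 * K := by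
    rw [hm0]
    calc |P - f * Q + r0| ≤ |P - f * Q| + |r0| := abs_add_le _ _
      _ ≤ |P| + |f * Q| + |r0| := by gcongr; exact abs_sub _ _
      _ ≤ K + 1 * K + K := by
          rw [abs_mul]; gcongr
      _ = 3 * K := by ring
  have hNid : f * (P ^ 2 + f * (-(2 * P * Q + P ^ 2 / 2)) + r1) - (f - f ^ 2 / 2 + r2) * m0 ^ 2
      = f * r1 + (-(r2 * m0 ^ 2)) + f * (-(2 * P * r0) - r0 ^ 2)
        + f ^ 2 * (r0 * (2 * Q + P) + r0 ^ 2 / 2) + f ^ 3 * (-(Q ^ 2) - P * Q - Q * r0)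
        + f ^ 4 * (Q ^ 2 / 2) := by rw [hm0]; ring
  rw [hNid]
  have ht1 : |f * r1| ≤ 30 * K ^ 3 * |f| ^ 3 := by
    rw [abs_mul]
    calc |f| * |r1| ≤ |f| * (30 * K ^ 3 * f ^ 2) := by gcongr
      _ = 30 * K ^ 3 * |f| ^ 3 := by rw [ha2]; ring
  have ht2 : |(-(r2 * m0 ^ 2))| ≤ 9 * K ^ 2 * |f| ^ 3 := by
    rw [abs_neg, abs_mul]
    have h1 : |m0 ^ 2| ≤ 9 * K ^ 2 := by
      rw [abs_pow]; nlinarith [abs_nonneg m0]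
    calc |r2| * |m0 ^ 2| ≤ |f| ^ 3 * (9 * K ^ 2) :=
          mul_le_mul hr2 h1 (abs_nonneg _) (by positivity)
      _ = 9 * K ^ 2 * |f| ^ 3 := by ring
  have ht3 : |f * (-(2 * P * r0) - r0 ^ 2)| ≤ 3 * K ^ 2 * |f| ^ 3 := by
    rw [abs_mul]
    have h1 : |(-(2 * P * r0) - r0 ^ 2)| ≤ 3 * K ^ 2 * f ^ 2 := by
      calc |(-(2 * P * r0) - r0 ^ 2)| ≤ |(-(2 * P * r0))| + |r0 ^ 2| := abs_sub _ _
        _ = 2 * |P| * |r0| + |r0| ^ 2 := by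
            rw [abs_neg, abs_mul, abs_mul, abs_pow]; norm_num
        _ ≤ 2 * K * (K * f ^ 2) + (K * f ^ 2) * K := by
            have e1 : |P| * |r0| ≤ K * (K * f ^ 2) :=
              mul_le_mul hPK hr0 (abs_nonneg _) hK0.le
            have e2 : |r0| ^ 2 ≤ (K * f ^ 2) * K := by
              nlinarith [hr0, abs_nonneg r0, hf2, sq_nonneg f,
                mul_nonneg hK0.le (sq_nonneg f)]
            nlinarith
        _ ≤ 3 * K ^ 2 * f ^ 2 := by ring_nf; nlinarith
    calc |f| * |(-(2 * P * r0) - r0 ^ 2)| ≤ |f| * (3 * K ^ 2 * f ^ 2) := by gcongr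
      _ = 3 * K ^ 2 * |f| ^ 3 := by rw [ha2]; ring
  have ht4 : |f ^ 2 * (r0 * (2 * Q + P) + r0 ^ 2 / 2)| ≤ 4 * K ^ 2 * |f| ^ 3 := by
    rw [abs_mul, abs_pow]
    have h1 : |r0 * (2 * Q + P) + r0 ^ 2 / 2| ≤ 4 * K ^ 2 * f ^ 2 := by
      calc |r0 * (2 * Q + P) + r0 ^ 2 / 2| ≤ |r0 * (2 * Q + P)| + |r0 ^ 2 / 2| := abs_add_le _ _
        _ ≤ (K * f ^ 2) * (3 * K) + (K * f ^ 2) * K / 2 := by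
            rw [abs_mul, abs_div]
            gcongr
            · calc |2 * Q + P| ≤ |2 * Q| + |P| := abs_add_le _ _
                _ ≤ 3 * K := by rw [abs_mul]; simp only [abs_two]; linarith
            · rw [abs_pow] at *
              calc |r0| ^ 2 ≤ (K * f ^ 2) * K := by nlinarith [abs_nonneg r0]
                _ ≤ _ := le_refl _
            · norm_num
        _ ≤ 4 * K ^ 2 * f ^ 2 := by nlinarith [sq_nonneg f]
    calc |f| ^ 2 * |r0 * (2 * Q + P) + r0 ^ 2 / 2| ≤ |f| ^ 2 * (4 * K ^ 2 * f ^ 2) := by gcongr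
      _ = 4 * K ^ 2 * |f| ^ 4 := by rw [ha2]; ring
      _ ≤ 4 * K ^ 2 * |f| ^ 3 := by nlinarith
  have ht5 : |f ^ 3 * (-(Q ^ 2) - P * Q - Q * r0)| ≤ 3 * K ^ 2 * |f| ^ 3 := by
    rw [abs_mul, abs_pow]
    have h1 : |(-(Q ^ 2) - P * Q - Q * r0)| ≤ 3 * K ^ 2 := by
      calc |(-(Q ^ 2) - P * Q - Q * r0)| ≤ |(-(Q ^ 2) - P * Q)| + |Q * r0| := abs_sub _ _
        _ ≤ |(-(Q ^ 2))| + |P * Q| + |Q * r0| := by gcongr; exact abs_sub _ _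
        _ = |Q| ^ 2 + |P| * |Q| + |Q| * |r0| := by
            rw [abs_neg, abs_pow, abs_mul, abs_mul]
        _ ≤ 3 * K ^ 2 := by nlinarith [abs_nonneg Q, abs_nonneg P, abs_nonneg r0]
    calc |f| ^ 3 * |(-(Q ^ 2) - P * Q - Q * r0)| ≤ |f| ^ 3 * (3 * K ^ 2) := by gcongr
      _ = 3 * K ^ 2 * |f| ^ 3 := by ring
  have ht6 : |f ^ 4 * (Q ^ 2 / 2)| ≤ K ^ 2 * |f| ^ 3 := by
    rw [abs_mul, abs_pow]
    have h1 : |Q ^ 2 / 2| ≤ K ^ 2 := by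
      rw [abs_div, abs_pow]
      have : |Q| ^ 2 ≤ K ^ 2 := by nlinarith [abs_nonneg Q]
      simp only [abs_two]
      nlinarith
    calc |f| ^ 4 * |Q ^ 2 / 2| ≤ |f| ^ 3 * K ^ 2 :=
          mul_le_mul ha4 h1 (abs_nonneg _) (by positivity)
      _ = K ^ 2 * |f| ^ 3 := by ring
  have habs : ∀ a b : ℝ, |a + b| ≤ |a| + |b| := abs_add_le
  have hKK : K ^ 2 * |f| ^ 3 ≤ K ^ 3 * |f| ^ 3 := by
    nlinarith [mul_nonneg (mul_nonneg (sq_nonneg K) (by linarith : (0:ℝ) ≤ K - 1))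
      (pow_nonneg ha0 3)]
  calc |f * r1 + (-(r2 * m0 ^ 2)) + f * (-(2 * P * r0) - r0 ^ 2)
        + f ^ 2 * (r0 * (2 * Q + P) + r0 ^ 2 / 2) + f ^ 3 * (-(Q ^ 2) - P * Q - Q * r0)
        + f ^ 4 * (Q ^ 2 / 2)|
      ≤ |f * r1 + (-(r2 * m0 ^ 2)) + f * (-(2 * P * r0) - r0 ^ 2)
        + f ^ 2 * (r0 * (2 * Q + P) + r0 ^ 2 / 2) + f ^ 3 * (-(Q ^ 2) - P * Q - Q * r0)|
        + |f ^ 4 * (Q ^ 2 / 2)| := abs_add_le _ _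
    _ ≤ |f * r1 + (-(r2 * m0 ^ 2)) + f * (-(2 * P * r0) - r0 ^ 2)
        + f ^ 2 * (r0 * (2 * Q + P) + r0 ^ 2 / 2)| + |f ^ 3 * (-(Q ^ 2) - P * Q - Q * r0)|
        + |f ^ 4 * (Q ^ 2 / 2)| := by gcongr ?_ + _; exact abs_add_le _ _
    _ ≤ |f * r1 + (-(r2 * m0 ^ 2)) + f * (-(2 * P * r0) - r0 ^ 2)|
        + |f ^ 2 * (r0 * (2 * Q + P) + r0 ^ 2 / 2)| + |f ^ 3 * (-(Q ^ 2) - P * Q - Q * r0)|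
        + |f ^ 4 * (Q ^ 2 / 2)| := by gcongr ?_ + _ + _; exact abs_add_le _ _
    _ ≤ |f * r1 + (-(r2 * m0 ^ 2))| + |f * (-(2 * P * r0) - r0 ^ 2)|
        + |f ^ 2 * (r0 * (2 * Q + P) + r0 ^ 2 / 2)| + |f ^ 3 * (-(Q ^ 2) - P * Q - Q * r0)|
        + |f ^ 4 * (Q ^ 2 / 2)| := by gcongr ?_ + _ + _ + _; exact abs_add_le _ _
    _ ≤ |f * r1| + |(-(r2 * m0 ^ 2))| + |f * (-(2 * P * r0) - r0 ^ 2)|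
        + |f ^ 2 * (r0 * (2 * Q + P) + r0 ^ 2 / 2)| + |f ^ 3 * (-(Q ^ 2) - P * Q - Q * r0)|
        + |f ^ 4 * (Q ^ 2 / 2)| := by gcongr ?_ + _ + _ + _ + _; exact abs_add_le _ _
    _ ≤ 60 * K ^ 3 * |f| ^ 3 := by
        have h30 : 30 * K ^ 3 * |f| ^ 3 + 9 * K ^ 2 * |f| ^ 3 + 3 * K ^ 2 * |f| ^ 3
            + 4 * K ^ 2 * |f| ^ 3 + 3 * K ^ 2 * |f| ^ 3 + K ^ 2 * |f| ^ 3
            ≤ 60 * K ^ 3 * |f| ^ 3 := by nlinarith [pow_nonneg ha0 3, sq_nonneg K]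
        linarith

/-! ### the main theorem -/

set_option maxHeartbeats 4000000 in
/-- As `f → 0`, `ζ(f)·D(f) = 1 + O(f²)` — the non-dimensional
Einstein relation holds to first order in `f`. -/
theorem stmt_11 (φ : ℝ → ℝ) (hφc : Continuous φ) (hφper : ∀ x, φ (x + 1) = φ x)
    (ζ D : ℝ → ℝ)
    (hζ : ∀ f, f ≠ 0 → ζ f = f * M0 φ f / (1 - Real.exp (-f)))
    (hζ0 : ζ 0 = M0 φ 0)
    (hD : ∀ f, D f = M1 φ f / (M0 φ f) ^ 3) :
    (fun f => ζ f * D f - 1) =O[nhds 0] (fun f => f ^ 2) := by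
  obtain ⟨M, hM0nn, hM⟩ := phi_bound φ hφc hφper
  have hK : (1:ℝ) ≤ Real.exp (2 * M) := K_ge_one φ M hM
  have hK0 : (0:ℝ) < Real.exp (2 * M) := Real.exp_pos _
  have hA0 : 0 < AA φ := lt_of_lt_of_le (Real.exp_pos _) (AA_ge φ M hφc hM)
  have hB0 : 0 < BB φ := lt_of_lt_of_le (Real.exp_pos _) (BB_ge φ M hφc hM)
  have hPpos : 0 < AA φ * BB φ := mul_pos hA0 hB0
  have hPK : AA φ * BB φ ≤ Real.exp (2 * M) := by
    calc AA φ * BB φ ≤ Real.exp M * Real.exp M :=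
          mul_le_mul (AA_le φ M hφc hM) (BB_le φ M hφc hM) hB0.le (Real.exp_pos _).le
      _ = Real.exp (2 * M) := by rw [← Real.exp_add]; ring_nf
  have hPKinv : 1 ≤ (AA φ * BB φ) * Real.exp (2 * M) := by
    have h1 : Real.exp (-(2 * M)) ≤ AA φ * BB φ := by
      calc Real.exp (-(2 * M)) = Real.exp (-M) * Real.exp (-M) := by
            rw [← Real.exp_add]; ring_nf
        _ ≤ AA φ * BB φ :=
            mul_le_mul (AA_ge φ M hφc hM) (BB_ge φ M hφc hM) (Real.exp_pos _).le hA0.le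
    calc (1:ℝ) = Real.exp (-(2 * M)) * Real.exp (2 * M) := by
          rw [← Real.exp_add]; simp
      _ ≤ (AA φ * BB φ) * Real.exp (2 * M) :=
          mul_le_mul_of_nonneg_right h1 hK0.le
  have hQK : |QQ φ| ≤ Real.exp (2 * M) := by
    unfold QQ
    have h := intervalIntegral.norm_integral_le_of_norm_le_const
      (C := Real.exp (2 * M)) (a := (0:ℝ)) (b := 1) (f := fun x => qA φ x)
      (fun x _ => by rw [Real.norm_eq_abs]; exact qA_bound φ M hM x)
    simpa using h
  have hMZ : MZ φ = (AA φ * BB φ) ^ 2 := MZ_eq φ hφc hφper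
  have hML : ML φ = -(2 * AA φ * BB φ * QQ φ + (AA φ * BB φ) ^ 2 / 2) := ML_eq φ hφc hφper
  have hM0zero : M0 φ 0 = AA φ * BB φ := M0_zero φ hφper
  have hM1zero : M1 φ 0 = (AA φ * BB φ) ^ 2 := by
    have h := M1_expand φ hφc M hM 0 (by norm_num)
    have h0 : (30:ℝ) * Real.exp (2 * M) ^ 3 * (0:ℝ) ^ 2 = 0 := by ring
    rw [h0] at h
    have h2 : M1 φ 0 - (MZ φ + 0 * ML φ) = 0 :=
      abs_eq_zero.mp (le_antisymm h (abs_nonneg _))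
    rw [← hMZ]; linarith
  set δ : ℝ := min (1/2) ((AA φ * BB φ) / (4 * Real.exp (2 * M))) with hδdef
  have hδpos : 0 < δ := lt_min (by norm_num) (by positivity)
  rw [isBigO_iff]
  refine ⟨480 * Real.exp (2 * M) ^ 5, ?_⟩
  filter_upwards [Metric.ball_mem_nhds (0:ℝ) hδpos] with f hfball
  rw [Metric.mem_ball, Real.dist_eq, sub_zero] at hfball
  have hfδ : |f| ≤ δ := hfball.le
  have hfhalf : |f| ≤ 1/2 := le_trans hfδ (min_le_left _ _)
  have hf1 : |f| ≤ 1 := by linarith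
  have hfP : |f| ≤ (AA φ * BB φ) / (4 * Real.exp (2 * M)) := le_trans hfδ (min_le_right _ _)
  rw [Real.norm_eq_abs, Real.norm_eq_abs]
  by_cases hf0 : f = 0
  · subst hf0
    rw [hζ0, hD 0, hM0zero, hM1zero]
    have hne : AA φ * BB φ ≠ 0 := hPpos.ne'
    have e : (AA φ * BB φ) * ((AA φ * BB φ) ^ 2 / (AA φ * BB φ) ^ 3) - 1 = 0 := by
      field_simp
      ring
    rw [e]
    simp
  · -- nonzero force
    have hr0 := M0_expand φ hφc hφper M hM f hf1
    have hr1 : |M1 φ f - ((AA φ * BB φ) ^ 2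
        + f * (-(2 * (AA φ * BB φ) * QQ φ + (AA φ * BB φ) ^ 2 / 2)))|
        ≤ 30 * Real.exp (2 * M) ^ 3 * f ^ 2 := by
      have h := M1_expand φ hφc M hM f hf1
      have e : M1 φ f - ((AA φ * BB φ) ^ 2
          + f * (-(2 * (AA φ * BB φ) * QQ φ + (AA φ * BB φ) ^ 2 / 2)))
          = M1 φ f - (MZ φ + f * ML φ) := by rw [hMZ, hML]; ring
      rw [e]; exact h
    have hr2 : |(1 - Real.exp (-f)) - (f - f ^ 2 / 2)| ≤ |f| ^ 3 := by
      have h := exp_cubic_bound f hf1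
      have e : (1 - Real.exp (-f)) - (f - f ^ 2 / 2)
          = -(Real.exp (-f) - (1 - f + f ^ 2 / 2)) := by ring
      rw [e, abs_neg]; exact h
    have hNb := num_bound (Real.exp (2 * M)) (AA φ * BB φ) (QQ φ)
      (M0 φ f - ((AA φ * BB φ) - f * QQ φ))
      (M1 φ f - ((AA φ * BB φ) ^ 2
        + f * (-(2 * (AA φ * BB φ) * QQ φ + (AA φ * BB φ) ^ 2 / 2))))
      ((1 - Real.exp (-f)) - (f - f ^ 2 / 2)) f (M0 φ f)
      hK hf1 (by rwa [abs_of_pos hPpos]) hQK hr0 hr1 hr2 (by ring)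
    have hNbound : |f * M1 φ f - (1 - Real.exp (-f)) * (M0 φ f) ^ 2|
        ≤ 60 * Real.exp (2 * M) ^ 3 * |f| ^ 3 := by
      have e : f * M1 φ f - (1 - Real.exp (-f)) * (M0 φ f) ^ 2
          = f * ((AA φ * BB φ) ^ 2
              + f * (-(2 * (AA φ * BB φ) * QQ φ + (AA φ * BB φ) ^ 2 / 2))
              + (M1 φ f - ((AA φ * BB φ) ^ 2
                + f * (-(2 * (AA φ * BB φ) * QQ φ + (AA φ * BB φ) ^ 2 / 2)))))
            - (f - f ^ 2 / 2 + ((1 - Real.exp (-f)) - (f - f ^ 2 / 2))) * (M0 φ f) ^ 2 := by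
        ring
      rw [e]; exact hNb
    -- lower bound on M0
    have hfK : |f| * Real.exp (2 * M) ≤ (AA φ * BB φ) / 4 := by
      rw [le_div_iff₀ (by positivity : (0:ℝ) < 4 * Real.exp (2 * M))] at hfP
      linarith
    have hsq : Real.exp (2 * M) * f ^ 2 ≤ |f| * Real.exp (2 * M) := by
      nlinarith [sq_abs f, abs_nonneg f]
    have hfQ : |f * QQ φ| ≤ |f| * Real.exp (2 * M) := by
      rw [abs_mul]
      exact mul_le_mul_of_nonneg_left hQK (abs_nonneg f)
    have hM0low : (AA φ * BB φ) / 2 ≤ M0 φ f := by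
      have h1 := abs_le.1 hr0
      have h2 := abs_le.1 hfQ
      nlinarith
    have hM0pos : 0 < M0 φ f := lt_of_lt_of_le (by positivity) hM0low
    have hexp_ne : 1 - Real.exp (-f) ≠ 0 := by
      intro h
      apply hf0
      have h1 : Real.exp (-f) = 1 := by linarith
      have h2 : -f = 0 := Real.exp_eq_exp.mp (h1.trans Real.exp_zero.symm)
      linarith
    have hden_low : |f| / 2 ≤ |1 - Real.exp (-f)| := by
      have e : 1 - Real.exp (-f) = (f - f ^ 2 / 2) + ((1 - Real.exp (-f)) - (f - f ^ 2 / 2)) := by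
        ring
      have t : |f| ≤ |1 - Real.exp (-f)| + (f ^ 2 / 2 + |f| ^ 3) := by
        calc |f| = |(1 - Real.exp (-f)) + (f ^ 2 / 2 - ((1 - Real.exp (-f)) - (f - f ^ 2 / 2)))| := by
              congr 1; ring
          _ ≤ |1 - Real.exp (-f)| + |f ^ 2 / 2 - ((1 - Real.exp (-f)) - (f - f ^ 2 / 2))| :=
              abs_add_le _ _
          _ ≤ |1 - Real.exp (-f)| + (|f ^ 2 / 2| + |(1 - Real.exp (-f)) - (f - f ^ 2 / 2)|) := by
              gcongr; exact abs_sub _ _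
          _ ≤ |1 - Real.exp (-f)| + (f ^ 2 / 2 + |f| ^ 3) := by
              gcongr
              all_goals first
                | exact le_of_eq (abs_of_nonneg (by positivity : (0:ℝ) ≤ f ^ 2 / 2))
                | exact hr2
      have hq1 : f ^ 2 / 2 ≤ |f| / 4 := by nlinarith [sq_abs f, abs_nonneg f]
      have hq2 : |f| ^ 3 ≤ |f| / 4 := by
        have h5 : |f| * |f| ≤ 1/2 * (1/2) :=
          mul_le_mul hfhalf hfhalf (abs_nonneg f) (by norm_num)
        have h6 := mul_le_mul_of_nonneg_left h5 (abs_nonneg f)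
        calc |f| ^ 3 = |f| * (|f| * |f|) := by ring
          _ ≤ |f| * (1/2 * (1/2)) := h6
          _ = |f| / 4 := by ring
      linarith
    -- put it together
    have heq : ζ f * D f - 1 = (f * M1 φ f - (1 - Real.exp (-f)) * (M0 φ f) ^ 2)
        / ((1 - Real.exp (-f)) * (M0 φ f) ^ 2) := by
      rw [hζ f hf0, hD f]
      field_simp
    rw [heq, abs_div]
    have hdenpos : 0 < |(1 - Real.exp (-f)) * (M0 φ f) ^ 2| :=
      abs_pos.2 (mul_ne_zero hexp_ne (pow_ne_zero 2 hM0pos.ne'))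
    rw [div_le_iff₀ hdenpos]
    have habs_den : |(1 - Real.exp (-f)) * (M0 φ f) ^ 2|
        = |1 - Real.exp (-f)| * (M0 φ f) ^ 2 := by
      rw [abs_mul, abs_of_pos (pow_pos hM0pos 2)]
    have h3 : 1 ≤ 2 * Real.exp (2 * M) * M0 φ f := by
      have h4 := mul_le_mul_of_nonneg_left hM0low
        (show (0:ℝ) ≤ 2 * Real.exp (2 * M) by positivity)
      nlinarith [hPKinv]
    have hMsq : 1 ≤ 4 * Real.exp (2 * M) ^ 2 * (M0 φ f) ^ 2 := by
      nlinarith [h3, sq_nonneg (2 * Real.exp (2 * M) * M0 φ f - 1)]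
    calc |f * M1 φ f - (1 - Real.exp (-f)) * (M0 φ f) ^ 2|
        ≤ 60 * Real.exp (2 * M) ^ 3 * |f| ^ 3 := hNbound
      _ = 120 * Real.exp (2 * M) ^ 3 * |f| ^ 2 * (|f| / 2) := by ring
      _ ≤ 120 * Real.exp (2 * M) ^ 3 * |f| ^ 2 * |1 - Real.exp (-f)| := by
          gcongr
      _ ≤ (120 * Real.exp (2 * M) ^ 3 * |f| ^ 2 * |1 - Real.exp (-f)|)
            * (4 * Real.exp (2 * M) ^ 2 * (M0 φ f) ^ 2) :=
          le_mul_of_one_le_right (by positivity) hMsq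
      _ = 480 * Real.exp (2 * M) ^ 5 * |f| ^ 2 * (|1 - Real.exp (-f)| * (M0 φ f) ^ 2) := by
          ring
      _ = 480 * Real.exp (2 * M) ^ 5 * |f ^ 2| * |(1 - Real.exp (-f)) * (M0 φ f) ^ 2| := by
          rw [habs_den, abs_pow]
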